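/- Let Y be a linear subspace of a finite-dimensional Banach space X, and suppose there exists a bounded linear extension operator E : Lip₀(Y) → Lip₀(X) (extending Lipschitz functions vanishing at 0 from Y to X with (Ef)|_Y = f). Then there exists a bounded linear projection P : X → Y onto Y with ‖P‖ ≤ ‖E‖. -/

import Mathlib

open MeasureTheory Filter Topology Metric Set Module

noncomputable section
namespace Stmt10Aux

set_option linter.unusedSectionVars false

section Mean
variable {V : Type*} [NormedAddCommGroup V] [NormedSpace ℝ V] [FiniteDimensional ℝ V]
  [MeasurableSpace V] [BorelSpace V]
variable (μ : Measure V) [μ.IsAddHaarMeasure] (U : Ultrafilter ℕ)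

/-- average over the ball of radius `n+1` -/
def avg (φ : V → ℝ) (n : ℕ) : ℝ :=
  ((μ (ball (0:V) (n+1))).toReal)⁻¹ * ∫ z in ball (0:V) (n+1), φ z ∂μ

/-- an invariant mean: ultrafilter limit of ball averages -/
def mean (φ : V → ℝ) : ℝ := limUnder (U : Filter ℕ) (avg μ φ)

lemma measure_ball_pos' (n : ℕ) : 0 < (μ (ball (0:V) (n+1))).toReal :=
  ENNReal.toReal_pos (ne_of_gt (measure_ball_pos μ _ (by positivity))) measure_ball_lt_top.ne

lemma integrableOn_ball {φ : V → ℝ} (hφ : Continuous φ) {x : V} {r : ℝ} :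
    IntegrableOn φ (ball x r) μ :=
  ((hφ.continuousOn).integrableOn_compact (isCompact_closedBall x r)).mono_set
    ball_subset_closedBall

lemma avg_mem_Icc {φ : V → ℝ} (hφ : Continuous φ) {B : ℝ} (hB : ∀ z, |φ z| ≤ B) (n : ℕ) :
    avg μ φ n ∈ Icc (-B) B := by
  have h1 : |∫ z in ball (0:V) (n+1), φ z ∂μ| ≤ B * (μ (ball (0:V) (n+1))).toReal := by
    have := norm_setIntegral_le_of_norm_le_const (μ := μ) (s := ball (0:V) (n+1)) (f := φ)
        (C := B) measure_ball_lt_top (fun x _ => by rw [Real.norm_eq_abs]; exact hB x)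
    simpa [Real.norm_eq_abs, measureReal_def] using this
  have h2 := measure_ball_pos' μ (V := V) n
  have : |avg μ φ n| ≤ B := by
    rw [avg, abs_mul, abs_inv, abs_of_pos h2]
    calc ((μ (ball (0:V) (n+1))).toReal)⁻¹ * |∫ z in ball (0:V) (n+1), φ z ∂μ|
        ≤ ((μ (ball (0:V) (n+1))).toReal)⁻¹ * (B * (μ (ball (0:V) (n+1))).toReal) :=
          mul_le_mul_of_nonneg_left h1 (by positivity)
      _ = B := by field_simp
  exact abs_le.1 this

lemma tendsto_avg_mean {φ : V → ℝ} (hφ : Continuous φ) {B : ℝ} (hB : ∀ z, |φ z| ≤ B) :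
    Tendsto (avg μ φ) (U : Filter ℕ) (𝓝 (mean μ U φ)) := by
  obtain ⟨a, -, ha⟩ := (isCompact_Icc (a := -B) (b := B)).ultrafilter_le_nhds
    (U.map (avg μ φ)) (by
      rw [Ultrafilter.coe_map]
      exact le_principal_iff.2 (Filter.mem_map.2 (by
        filter_upwards with n using avg_mem_Icc μ hφ hB n)))
  have ht : Tendsto (avg μ φ) (U : Filter ℕ) (𝓝 a) := by
    rwa [Ultrafilter.coe_map] at ha
  rwa [mean, ht.limUnder_eq]

lemma abs_mean_le {φ : V → ℝ} (hφ : Continuous φ) {B : ℝ} (hB : ∀ z, |φ z| ≤ B) :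
    |mean μ U φ| ≤ B := by
  have := isClosed_Icc.mem_of_tendsto (tendsto_avg_mean μ U hφ hB)
    (Eventually.of_forall (avg_mem_Icc μ hφ hB))
  exact abs_le.2 this

lemma mean_const (b : ℝ) : mean μ U (fun _ => b) = b := by
  have h : ∀ n, avg μ (fun _ => b) n = b := by
    intro n
    rw [avg, setIntegral_const, smul_eq_mul]
    field_simp [(measure_ball_pos' μ (V := V) n).ne']
    rfl
  have ht : Tendsto (avg μ (fun _ : V => b)) (U : Filter ℕ) (𝓝 b) := by
    simp only [funext h]
    exact tendsto_const_nhds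
  rw [mean, ht.limUnder_eq]

lemma mean_add {φ ψ : V → ℝ} (hφ : Continuous φ) {B : ℝ} (hB : ∀ z, |φ z| ≤ B)
    (hψ : Continuous ψ) {C : ℝ} (hC : ∀ z, |ψ z| ≤ C) :
    mean μ U (fun z => φ z + ψ z) = mean μ U φ + mean μ U ψ := by
  have h : ∀ n, avg μ (fun z => φ z + ψ z) n = avg μ φ n + avg μ ψ n := by
    intro n
    rw [avg, avg, avg, ← mul_add,
      ← integral_add (integrableOn_ball μ hφ) (integrableOn_ball μ hψ)]
  have ht : Tendsto (avg μ (fun z => φ z + ψ z)) (U : Filter ℕ)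
      (𝓝 (mean μ U φ + mean μ U ψ)) := by
    simpa [funext h] using (tendsto_avg_mean μ U hφ hB).add (tendsto_avg_mean μ U hψ hC)
  rw [mean, ht.limUnder_eq]

lemma mean_smul (a : ℝ) {φ : V → ℝ} (hφ : Continuous φ) {B : ℝ} (hB : ∀ z, |φ z| ≤ B) :
    mean μ U (fun z => a * φ z) = a * mean μ U φ := by
  have h : ∀ n, avg μ (fun z => a * φ z) n = a * avg μ φ n := by
    intro n
    rw [avg, avg, integral_const_mul]
    ring
  have ht : Tendsto (avg μ (fun z => a * φ z)) (U : Filter ℕ) (𝓝 (a * mean μ U φ)) := by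
    simpa [funext h] using (tendsto_avg_mean μ U hφ hB).const_mul a
  rw [mean, ht.limUnder_eq]

lemma mean_sub_const {φ : V → ℝ} (hφ : Continuous φ) {B : ℝ} (hB : ∀ z, |φ z| ≤ B) (b : ℝ) :
    mean μ U (fun z => φ z - b) = mean μ U φ - b := by
  have h := mean_add μ U hφ hB (continuous_const (y := -b)) (C := |b|)
    (fun _ => by simp) (ψ := fun _ => -b)
  simp only [sub_eq_add_neg]
  rw [h, mean_const]

lemma avg_shift_bound [Nontrivial V] {φ : V → ℝ} (hφ : Continuous φ) {B : ℝ}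
    (hB : ∀ z, |φ z| ≤ B) (v : V) (n : ℕ) (hn : ‖v‖ ≤ (n:ℝ)+1) :
    |avg μ (fun z => φ (z + v)) n - avg μ φ n| ≤
      2*B*((1+‖v‖/((n:ℝ)+1))^(finrank ℝ V) - (1-‖v‖/((n:ℝ)+1))^(finrank ℝ V)) := by
  set d := finrank ℝ V with hd
  set r : ℝ := (n:ℝ)+1 with hrdef
  have hr : 0 < r := by positivity
  set a : ℝ := ‖v‖ with hadef
  have ha : 0 ≤ a := norm_nonneg v
  have hB0 : 0 ≤ B := le_trans (abs_nonneg _) (hB 0)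
  set κ : ℝ := (μ (ball (0:V) 1)).toReal with hκdef
  have hκ : 0 < κ :=
    ENNReal.toReal_pos (ne_of_gt (measure_ball_pos μ _ one_pos)) measure_ball_lt_top.ne
  have hball : ∀ {s : ℝ}, 0 ≤ s → (μ (ball (0:V) s)).toReal = s^d * κ := by
    intro s hs
    rw [Measure.addHaar_ball μ _ hs, ENNReal.toReal_mul, ENNReal.toReal_ofReal (by positivity)]
  set inn := ball (0:V) (r - a) with hinn
  set out := ball (0:V) (r + a) with hout
  have hshift : ∫ z in ball (0:V) r, φ (z + v) ∂μ = ∫ z in ball v r, φ z ∂μ := by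
    have hmp : MeasurePreserving (fun z : V => z + v) μ μ := measurePreserving_add_right μ v
    have hme : MeasurableEmbedding (fun z : V => z + v) :=
      (MeasurableEquiv.addRight v).measurableEmbedding
    have himg : (fun z : V => z + v) ⁻¹' ball v r = ball (0:V) r := by
      ext w; simp [mem_ball, dist_eq_norm]
    rw [← himg, hmp.setIntegral_preimage_emb hme]
  have key : ∀ x₀ : V, inn ⊆ ball x₀ r → ball x₀ r ⊆ out →
      |(∫ z in ball x₀ r, φ z ∂μ) - ∫ z in inn, φ z ∂μ| ≤
        B * ((μ out).toReal - (μ inn).toReal) := by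
    intro x₀ h1 h2
    rw [← integral_diff measurableSet_ball (integrableOn_ball μ hφ) h1]
    have hfin : μ (ball x₀ r \ inn) < ⊤ :=
      lt_of_le_of_lt (measure_mono diff_subset) measure_ball_lt_top
    have hio : inn ⊆ out := ball_subset_ball (by linarith)
    calc |∫ z in ball x₀ r \ inn, φ z ∂μ|
        ≤ B * (μ (ball x₀ r \ inn)).toReal := by
          have := norm_setIntegral_le_of_norm_le_const (μ := μ) (s := ball x₀ r \ inn) (f := φ)
              (C := B) hfin (fun x _ => by rw [Real.norm_eq_abs]; exact hB x)
          simpa [Real.norm_eq_abs, measureReal_def] using this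
      _ ≤ B * (μ (out \ inn)).toReal := by
          refine mul_le_mul_of_nonneg_left ?_ hB0
          exact ENNReal.toReal_mono (ne_of_lt (lt_of_le_of_lt (measure_mono diff_subset)
            measure_ball_lt_top)) (measure_mono (diff_subset_diff_left h2))
      _ = B * ((μ out).toReal - (μ inn).toReal) := by
          rw [measure_diff hio measurableSet_ball.nullMeasurableSet measure_ball_lt_top.ne,
            ENNReal.toReal_sub_of_le (measure_mono hio) measure_ball_lt_top.ne]
  have hsub1 : inn ⊆ ball v r := by
    intro z hz
    simp only [hinn, mem_ball, dist_eq_norm, sub_zero] at hz ⊢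
    calc ‖z - v‖ ≤ ‖z‖ + ‖v‖ := norm_sub_le _ _
      _ < r := by rw [← hadef] at *; linarith
  have hsub2 : inn ⊆ ball (0:V) r := ball_subset_ball (by linarith)
  have hsub3 : ball v r ⊆ out := by
    intro z hz
    simp only [hout, mem_ball, dist_eq_norm, sub_zero] at hz ⊢
    calc ‖z‖ ≤ ‖z - v‖ + ‖v‖ := by simpa using norm_add_le (z - v) v
      _ < r + a := by rw [← hadef] at *; linarith
  have hsub4 : ball (0:V) r ⊆ out := ball_subset_ball (by linarith)
  have htri : |(∫ z in ball v r, φ z ∂μ) - ∫ z in ball (0:V) r, φ z ∂μ| ≤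
      2 * B * ((μ out).toReal - (μ inn).toReal) := by
    calc |(∫ z in ball v r, φ z ∂μ) - ∫ z in ball (0:V) r, φ z ∂μ|
        ≤ |(∫ z in ball v r, φ z ∂μ) - ∫ z in inn, φ z ∂μ| +
          |(∫ z in ball (0:V) r, φ z ∂μ) - ∫ z in inn, φ z ∂μ| := by
          rw [abs_sub_comm (∫ z in ball (0:V) r, φ z ∂μ)]
          exact abs_sub_le _ _ _
      _ ≤ B * ((μ out).toReal - (μ inn).toReal) + B * ((μ out).toReal - (μ inn).toReal) :=
          add_le_add (key v hsub1 hsub3) (key 0 hsub2 hsub4)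
      _ = 2 * B * ((μ out).toReal - (μ inn).toReal) := by ring
  have hμout : (μ out).toReal = (r+a)^d * κ := hball (by linarith)
  have hμinn : (μ inn).toReal = (r-a)^d * κ := hball (by linarith)
  have hμr : (μ (ball (0:V) r)).toReal = r^d * κ := hball hr.le
  have havg : avg μ (fun z => φ (z + v)) n - avg μ φ n =
      (r^d * κ)⁻¹ * ((∫ z in ball v r, φ z ∂μ) - ∫ z in ball (0:V) r, φ z ∂μ) := by
    rw [avg, avg, ← hrdef, hμr, hshift, mul_sub]
  rw [havg, abs_mul, abs_inv, abs_of_pos (by positivity)]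
  have e1 : (1+a/r)^d = (r+a)^d / r^d := by
    rw [← div_pow]; congr 1; field_simp
  have e2 : (1-a/r)^d = (r-a)^d / r^d := by
    rw [← div_pow]; congr 1; field_simp
  calc (r^d * κ)⁻¹ * |(∫ z in ball v r, φ z ∂μ) - ∫ z in ball (0:V) r, φ z ∂μ|
      ≤ (r^d * κ)⁻¹ * (2 * B * ((μ out).toReal - (μ inn).toReal)) :=
        mul_le_mul_of_nonneg_left htri (by positivity)
    _ = 2*B*((1+a/r)^d - (1-a/r)^d) := by
        rw [hμout, hμinn, e1, e2]
        field_simp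

lemma mean_comp_add (hU : (U : Filter ℕ) ≤ atTop) {φ : V → ℝ} (hφ : Continuous φ) {B : ℝ}
    (hB : ∀ z, |φ z| ≤ B) (v : V) :
    mean μ U (fun z => φ (z + v)) = mean μ U φ := by
  rcases subsingleton_or_nontrivial V with hV | hV
  · have : (fun z : V => φ (z + v)) = φ := funext fun z => by rw [Subsingleton.elim (z+v) z]
    rw [this]
  · set d := finrank ℝ V with hd
    have hφ' : Continuous (fun z : V => φ (z + v)) := hφ.comp (continuous_id.add continuous_const)
    have hB' : ∀ z : V, |φ (z + v)| ≤ B := fun z => hB _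
    have h0 : Tendsto (fun n => avg μ (fun z => φ (z + v)) n - avg μ φ n) atTop (𝓝 0) := by
      apply squeeze_zero_norm'
        (a := fun n : ℕ => 2*B*((1+‖v‖/((n:ℝ)+1))^d - (1-‖v‖/((n:ℝ)+1))^d))
      · filter_upwards [eventually_ge_atTop ⌈‖v‖⌉₊] with n hn
        have h1 : ‖v‖ ≤ (n:ℝ)+1 := by
          have := Nat.le_ceil ‖v‖
          have h2 : (⌈‖v‖⌉₊ : ℝ) ≤ (n : ℝ) := Nat.cast_le.2 hn
          linarith
        simpa [Real.norm_eq_abs] using avg_shift_bound μ hφ hB v n h1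
      · have hu : Tendsto (fun n : ℕ => ‖v‖/((n:ℝ)+1)) atTop (𝓝 0) := by
          apply Filter.Tendsto.div_atTop tendsto_const_nhds
          exact tendsto_atTop_add_const_right _ 1 tendsto_natCast_atTop_atTop
        have hcont : Tendsto (fun u : ℝ => 2*B*((1+u)^d - (1-u)^d)) (𝓝 0) (𝓝 0) := by
          have hc : Continuous fun u : ℝ => 2*B*((1+u)^d - (1-u)^d) := by fun_prop
          have h00 : 2*B*((1+(0:ℝ))^d - (1-(0:ℝ))^d) = 0 := by norm_num
          simpa [h00] using hc.tendsto 0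
        exact hcont.comp hu
    have h1 := tendsto_avg_mean μ U hφ' hB'
    have h2 := tendsto_avg_mean μ U hφ hB
    have h3 : Tendsto (fun n => avg μ (fun z => φ (z + v)) n) (U : Filter ℕ)
        (𝓝 (mean μ U φ)) := by
      have := h2.add (h0.mono_left hU)
      simpa using this
    exact tendsto_nhds_unique h1 h3

end Mean

section Main
variable {X : Type*} [NormedAddCommGroup X] [NormedSpace ℝ X] [FiniteDimensional ℝ X]
  [MeasurableSpace X] [BorelSpace X]
variable {Y : Submodule ℝ X} [MeasurableSpace ↥Y] [BorelSpace ↥Y]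
variable (μY : Measure ↥Y) [μY.IsAddHaarMeasure] (μX : Measure X) [μX.IsAddHaarMeasure]
variable (U : Ultrafilter ℕ)
variable (E : (↥Y → ℝ) →ₗ[ℝ] (X → ℝ)) (c : NNReal)

/-- the "Y-affinization" of `E f` -/
def FF (f : ↥Y →L[ℝ] ℝ) (x : X) : ℝ := mean μY U (fun z : ↥Y => E ⇑f (x + ↑z) - f z)

/-- the linearization of `E f` -/
def LL (f : ↥Y →L[ℝ] ℝ) (x : X) : ℝ :=
  mean μX U (fun s : X => FF μY U E f (x + s) - FF μY U E f s)

variable {E c}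
variable (hE : ∀ (f : ↥Y → ℝ) (K : NNReal), LipschitzWith K f → f 0 = 0 →
      (∀ y : ↥Y, E f (y : X) = f y) ∧ LipschitzWith (c * K) (E f))

section WithhE
include hE

lemma hEf (f : ↥Y →L[ℝ] ℝ) :
    (∀ y : ↥Y, E ⇑f (y : X) = f y) ∧ LipschitzWith (c * ‖f‖₊) (E ⇑f) :=
  hE ⇑f ‖f‖₊ f.lipschitz (map_zero f)

lemma contF_integrand (f : ↥Y →L[ℝ] ℝ) (x : X) :
    Continuous fun z : ↥Y => E ⇑f (x + ↑z) - f z :=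
  ((hEf hE f).2.continuous.comp (continuous_const.add continuous_subtype_val)).sub f.continuous

lemma bndF_integrand (f : ↥Y →L[ℝ] ℝ) (x : X) (z : ↥Y) :
    |E ⇑f (x + ↑z) - f z| ≤ ((c : ℝ) * ‖f‖) * ‖x‖ := by
  have h1 := (hEf hE f).1 z
  have h2 := (hEf hE f).2.dist_le_mul (x + ↑z) ↑z
  rw [Real.dist_eq, dist_eq_norm, add_sub_cancel_right, h1] at h2
  simpa using h2

lemma FF_sub_FF (f : ↥Y →L[ℝ] ℝ) (x x' : X) :
    |FF μY U E f x - FF μY U E f x'| ≤ ((c : ℝ) * ‖f‖) * ‖x - x'‖ := by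
  have hdiffc : Continuous fun z : ↥Y => E ⇑f (x + ↑z) - E ⇑f (x' + ↑z) :=
    ((hEf hE f).2.continuous.comp (continuous_const.add continuous_subtype_val)).sub
      ((hEf hE f).2.continuous.comp (continuous_const.add continuous_subtype_val))
  have hdiffb : ∀ z : ↥Y, |E ⇑f (x + ↑z) - E ⇑f (x' + ↑z)| ≤ ((c : ℝ) * ‖f‖) * ‖x - x'‖ := by
    intro z
    have h2 := (hEf hE f).2.dist_le_mul (x + ↑z) (x' + ↑z)
    rw [Real.dist_eq, dist_eq_norm, add_sub_add_right_eq_sub] at h2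
    simpa using h2
  have key : (fun z : ↥Y => E ⇑f (x + ↑z) - f z) =
      fun z : ↥Y => (E ⇑f (x + ↑z) - E ⇑f (x' + ↑z)) + (E ⇑f (x' + ↑z) - f z) := by
    funext z; ring
  simp only [FF]
  rw [key, mean_add μY U hdiffc hdiffb (contF_integrand hE f x') (bndF_integrand hE f x'),
    add_sub_cancel_right]
  exact abs_mean_le μY U hdiffc hdiffb

lemma FF_cont (f : ↥Y →L[ℝ] ℝ) : Continuous (FF μY U E f) := by
  have : LipschitzWith (c * ‖f‖₊) (FF μY U E f) := by
    apply LipschitzWith.of_dist_le_mul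
    intro x x'
    rw [Real.dist_eq, dist_eq_norm]
    simpa using FF_sub_FF μY U hE f x x'
  exact this.continuous

lemma FF_add_coe (hU : (U : Filter ℕ) ≤ atTop) (f : ↥Y →L[ℝ] ℝ) (x : X) (y : ↥Y) :
    FF μY U E f (x + ↑y) = FF μY U E f x + f y := by
  have h : mean μY U (fun z : ↥Y => E ⇑f (x + ↑(z + y)) - f (z + y)) =
      mean μY U (fun z : ↥Y => E ⇑f (x + ↑z) - f z) :=
    mean_comp_add μY U hU (contF_integrand hE f x) (bndF_integrand hE f x) y
  have hfun : (fun z : ↥Y => E ⇑f (x + ↑(z + y)) - f (z + y))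
      = fun z : ↥Y => (E ⇑f ((x + ↑y) + ↑z) - f z) - f y := by
    funext z
    have h1 : x + (↑(z + y) : X) = (x + ↑y) + ↑z := by rw [Submodule.coe_add]; abel
    rw [h1, map_add]; ring
  rw [hfun, mean_sub_const μY U (contF_integrand hE f (x + ↑y)) (bndF_integrand hE f (x + ↑y))
    (f y)] at h
  simp only [FF]
  linarith [h]

lemma FF_coe (f : ↥Y →L[ℝ] ℝ) (y : ↥Y) : FF μY U E f ↑y = f y := by
  have hfun : (fun z : ↥Y => E ⇑f (↑y + ↑z) - f z) = fun _ : ↥Y => f y := by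
    funext z
    have h1 : ((y : X) + ↑z) = ((y + z : ↥Y) : X) := by rw [Submodule.coe_add]
    rw [h1, (hEf hE f).1 (y + z), map_add]; ring
  rw [FF, hfun, mean_const]

lemma contL_integrand (f : ↥Y →L[ℝ] ℝ) (x : X) :
    Continuous fun s : X => FF μY U E f (x + s) - FF μY U E f s :=
  ((FF_cont μY U hE f).comp (continuous_const.add continuous_id)).sub (FF_cont μY U hE f)

lemma bndL_integrand (f : ↥Y →L[ℝ] ℝ) (x : X) (s : X) :
    |FF μY U E f (x + s) - FF μY U E f s| ≤ ((c : ℝ) * ‖f‖) * ‖x‖ := by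
  have := FF_sub_FF μY U hE f (x + s) s
  rwa [add_sub_cancel_right] at this

lemma LL_bound (f : ↥Y →L[ℝ] ℝ) (x : X) : |LL μY μX U E f x| ≤ ((c : ℝ) * ‖f‖) * ‖x‖ :=
  abs_mean_le μX U (contL_integrand μY U hE f x) (bndL_integrand μY U hE f x)

lemma LL_coe (hU : (U : Filter ℕ) ≤ atTop) (f : ↥Y →L[ℝ] ℝ) (y : ↥Y) :
    LL μY μX U E f ↑y = f y := by
  have hfun : (fun s : X => FF μY U E f (↑y + s) - FF μY U E f s) = fun _ : X => f y := by
    funext s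
    rw [add_comm (↑y : X) s, FF_add_coe μY U hE hU f s y]; ring
  rw [LL, hfun, mean_const]

lemma LL_add (hU : (U : Filter ℕ) ≤ atTop) (f : ↥Y →L[ℝ] ℝ) (x x' : X) :
    LL μY μX U E f (x + x') = LL μY μX U E f x + LL μY μX U E f x' := by
  have h : mean μX U (fun s : X => FF μY U E f (x + (s + x')) - FF μY U E f (s + x')) =
      mean μX U (fun s : X => FF μY U E f (x + s) - FF μY U E f s) :=
    mean_comp_add μX U hU (contL_integrand μY U hE f x) (bndL_integrand μY U hE f x) x'
  have hfun1 : (fun s : X => FF μY U E f (x + (s + x')) - FF μY U E f (s + x'))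
      = fun s : X => FF μY U E f ((x + x') + s) - FF μY U E f (x' + s) := by
    funext s
    rw [show x + (s + x') = (x + x') + s by abel, show s + x' = x' + s by abel]
  rw [hfun1] at h
  have hc1 : Continuous fun s : X => FF μY U E f ((x + x') + s) - FF μY U E f (x' + s) :=
    ((FF_cont μY U hE f).comp (continuous_const.add continuous_id)).sub
      ((FF_cont μY U hE f).comp (continuous_const.add continuous_id))
  have hb1 : ∀ s : X, |FF μY U E f ((x + x') + s) - FF μY U E f (x' + s)| ≤
      ((c : ℝ) * ‖f‖) * ‖x‖ := by
    intro s
    have := FF_sub_FF μY U hE f ((x + x') + s) (x' + s)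
    rwa [show ((x + x') + s) - (x' + s) = x by abel] at this
  have hc2 : Continuous fun s : X => FF μY U E f (x' + s) - FF μY U E f s :=
    contL_integrand μY U hE f x'
  have hb2 := bndL_integrand μY U hE f x'
  have hsplit : (fun s : X => FF μY U E f ((x + x') + s) - FF μY U E f s) =
      fun s : X => (FF μY U E f ((x + x') + s) - FF μY U E f (x' + s)) +
        (FF μY U E f (x' + s) - FF μY U E f s) := by
    funext s; ring
  simp only [LL]
  rw [hsplit, mean_add μX U hc1 hb1 hc2 hb2, h]

lemma FF_addf (f f' : ↥Y →L[ℝ] ℝ) (x : X) :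
    FF μY U E (f + f') x = FF μY U E f x + FF μY U E f' x := by
  have hco : (⇑(f + f') : ↥Y → ℝ) = ⇑f + ⇑f' := rfl
  have hfun : (fun z : ↥Y => E ⇑(f + f') (x + ↑z) - (f + f') z)
      = fun z : ↥Y => (E ⇑f (x + ↑z) - f z) + (E ⇑f' (x + ↑z) - f' z) := by
    funext z
    rw [hco, map_add]
    simp only [Pi.add_apply, ContinuousLinearMap.add_apply]
    ring
  simp only [FF]
  rw [hfun, mean_add μY U (contF_integrand hE f x) (bndF_integrand hE f x)
    (contF_integrand hE f' x) (bndF_integrand hE f' x)]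

lemma FF_smulf (a : ℝ) (f : ↥Y →L[ℝ] ℝ) (x : X) :
    FF μY U E (a • f) x = a * FF μY U E f x := by
  have hco : (⇑(a • f) : ↥Y → ℝ) = a • ⇑f := rfl
  have hfun : (fun z : ↥Y => E ⇑(a • f) (x + ↑z) - (a • f) z)
      = fun z : ↥Y => a * (E ⇑f (x + ↑z) - f z) := by
    funext z
    rw [hco, E.map_smul]
    simp only [Pi.smul_apply, ContinuousLinearMap.smul_apply, smul_eq_mul]
    ring
  simp only [FF]
  rw [hfun, mean_smul μY U a (contF_integrand hE f x) (bndF_integrand hE f x)]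

lemma LL_addf (f f' : ↥Y →L[ℝ] ℝ) (x : X) :
    LL μY μX U E (f + f') x = LL μY μX U E f x + LL μY μX U E f' x := by
  have hfun : (fun s : X => FF μY U E (f + f') (x + s) - FF μY U E (f + f') s)
      = fun s : X => (FF μY U E f (x + s) - FF μY U E f s) +
        (FF μY U E f' (x + s) - FF μY U E f' s) := by
    funext s
    rw [FF_addf μY U hE, FF_addf μY U hE]; ring
  simp only [LL]
  rw [hfun, mean_add μX U (contL_integrand μY U hE f x) (bndL_integrand μY U hE f x)
    (contL_integrand μY U hE f' x) (bndL_integrand μY U hE f' x)]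

lemma LL_smulf (a : ℝ) (f : ↥Y →L[ℝ] ℝ) (x : X) :
    LL μY μX U E (a • f) x = a * LL μY μX U E f x := by
  have hfun : (fun s : X => FF μY U E (a • f) (x + s) - FF μY U E (a • f) s)
      = fun s : X => a * (FF μY U E f (x + s) - FF μY U E f s) := by
    funext s
    rw [FF_smulf μY U hE, FF_smulf μY U hE]; ring
  simp only [LL]
  rw [hfun, mean_smul μX U a (contL_integrand μY U hE f x) (bndL_integrand μY U hE f x)]

lemma LL_zero (x : X) : LL μY μX U E (0 : ↥Y →L[ℝ] ℝ) x = 0 := by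
  have := LL_smulf μY μX U hE (0 : ℝ) (0 : ↥Y →L[ℝ] ℝ) x
  rwa [zero_smul, zero_mul] at this

end WithhE
end Main

end Stmt10Aux

set_option maxHeartbeats 1000000
open Stmt10Aux

/-- If `Y` is a linear subspace of a finite-dimensional Banach space `X` and there is a
bounded linear extension operator `E : Lip₀(Y) → Lip₀(X)` of norm at most `c` (i.e.
`(Ef)|_Y = f` and `Lip(Ef) ≤ c · Lip(f)`), then there is a bounded linear projection
`P : X → Y` onto `Y` with `‖P‖ ≤ c`. -/
theorem stmt_10 {X : Type*} [NormedAddCommGroup X] [NormedSpace ℝ X]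
    [FiniteDimensional ℝ X] (Y : Submodule ℝ X)
    (E : (↥Y → ℝ) →ₗ[ℝ] (X → ℝ)) (c : NNReal)
    (hE : ∀ (f : ↥Y → ℝ) (K : NNReal), LipschitzWith K f → f 0 = 0 →
      (∀ y : ↥Y, E f (y : X) = f y) ∧ LipschitzWith (c * K) (E f)) :
    ∃ P : X →L[ℝ] X, (∀ x : X, P x ∈ Y) ∧ (∀ y ∈ Y, P y = y) ∧ ‖P‖ ≤ c := by
  classical
  letI : MeasurableSpace X := borel X
  haveI : BorelSpace X := ⟨rfl⟩
  letI : MeasurableSpace ↥Y := borel ↥Y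
  haveI : BorelSpace ↥Y := ⟨rfl⟩
  set μX : Measure X := (Module.finBasis ℝ X).addHaar with hμX
  set μY : Measure ↥Y := (Module.finBasis ℝ ↥Y).addHaar with hμY
  haveI : μX.IsAddHaarMeasure := by rw [hμX]; infer_instance
  haveI : μY.IsAddHaarMeasure := by rw [hμY]; infer_instance
  set U : Ultrafilter ℕ := Ultrafilter.of atTop with hUdef
  have hU : (U : Filter ℕ) ≤ atTop := Ultrafilter.of_le _
  set ι := Fin (Module.finrank ℝ ↥Y) with hι
  set b : Basis ι ℝ ↥Y := Module.finBasis ℝ ↥Y with hb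
  set fi : ι → (↥Y →L[ℝ] ℝ) := fun i => LinearMap.toContinuousLinearMap (b.coord i) with hfi
  -- the linearized functionals, as continuous linear maps
  have hLmk : ∀ f : ↥Y →L[ℝ] ℝ, ∃ L : X →L[ℝ] ℝ, ⇑L = LL μY μX U E f := by
    intro f
    have hadd : ∀ x x', LL μY μX U E f (x + x') = LL μY μX U E f x + LL μY μX U E f x' :=
      LL_add μY μX U hE hU f
    let A : X →+ ℝ := AddMonoidHom.mk' (LL μY μX U E f) hadd
    have hAc : Continuous A := by
      have hlip : LipschitzWith (c * ‖f‖₊) A := by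
        apply LipschitzWith.of_dist_le_mul
        intro x x'
        rw [Real.dist_eq, dist_eq_norm]
        have h1 : A x - A x' = A (x - x') := (AddMonoidHom.map_sub A x x').symm
        rw [h1]
        have h2 : A (x - x') = LL μY μX U E f (x - x') := rfl
        rw [h2]
        simpa using LL_bound μY μX U hE f (x - x')
      exact hlip.continuous
    exact ⟨A.toRealLinearMap hAc, rfl⟩
  choose L hL using hLmk
  set P : X →L[ℝ] X := ∑ i, (L (fi i)).smulRight ((b i : X)) with hP
  have hPapp : ∀ x : X, P x = ∑ i, LL μY μX U E (fi i) x • ((b i : ↥Y) : X) := by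
    intro x
    rw [hP]
    simp only [ContinuousLinearMap.sum_apply, ContinuousLinearMap.smulRight_apply]
    refine Finset.sum_congr rfl fun i _ => ?_
    rw [hL]
  refine ⟨P, ?_, ?_, ?_⟩
  · intro x
    rw [hPapp]
    exact Submodule.sum_mem _ fun i _ => Submodule.smul_mem _ _ (SetLike.coe_mem _)
  · intro y hy
    set y' : ↥Y := ⟨y, hy⟩ with hy'
    have hcoe : ∀ i, LL μY μX U E (fi i) y = b.repr y' i := by
      intro i
      have h1 : (y : X) = (y' : X) := rfl
      rw [h1, LL_coe μY μX U hE hU (fi i) y']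
      simp [hfi, Basis.coord_apply]
    rw [hPapp]
    have h2 : ∑ i, LL μY μX U E (fi i) y • ((b i : ↥Y) : X)
        = ((∑ i, b.repr y' i • b i : ↥Y) : X) := by
      push_cast
      exact Finset.sum_congr rfl fun i _ => by rw [hcoe i]
    rw [h2, b.sum_repr y']
  · apply ContinuousLinearMap.opNorm_le_bound _ c.coe_nonneg
    intro x
    set w : ↥Y := ∑ i, LL μY μX U E (fi i) x • b i with hw
    have hPw : P x = (w : X) := by
      rw [hPapp, hw]
      push_cast
      rfl
    obtain ⟨φ, hφ1, hφw⟩ := exists_dual_vector'' ℝ w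
    -- expansion of φ over the basis, as continuous linear maps
    have hrepr : φ = ∑ i, φ (b i) • fi i := by
      ext1 y
      conv_lhs => rw [← b.sum_repr y]
      rw [map_sum]
      simp only [ContinuousLinearMap.sum_apply, ContinuousLinearMap.smul_apply,
        _root_.map_smul, smul_eq_mul, hfi, LinearMap.coe_toContinuousLinearMap',
        Basis.coord_apply]
      exact Finset.sum_congr rfl fun i _ => mul_comm _ _
    -- LL is additive in `f` over finite sums
    have hLLsum : ∀ s : Finset ι,
        LL μY μX U E (∑ i ∈ s, φ (b i) • fi i) x = ∑ i ∈ s, φ (b i) * LL μY μX U E (fi i) x := by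
      intro s
      induction s using Finset.induction with
      | empty => simpa using LL_zero μY μX U hE x
      | insert _ _ hnotmem ih =>
        rw [Finset.sum_insert hnotmem, Finset.sum_insert hnotmem, LL_addf μY μX U hE,
          LL_smulf μY μX U hE, ih]
    have hLφ : LL μY μX U E φ x = ∑ i, φ (b i) * LL μY μX U E (fi i) x := by
      conv_lhs => rw [hrepr]
      exact hLLsum Finset.univ
    have hnorm : ‖P x‖ = ‖w‖ := by rw [hPw]; exact (Submodule.norm_coe w).symm ▸ rfl
    have hφw2 : φ w = ∑ i, φ (b i) * LL μY μX U E (fi i) x := by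
      rw [hw, map_sum]
      refine Finset.sum_congr rfl fun i _ => ?_
      rw [_root_.map_smul, smul_eq_mul, mul_comm]
    calc ‖P x‖ = ‖w‖ := by rw [hPw]; exact rfl
      _ = φ w := hφw.symm
      _ = LL μY μX U E φ x := by rw [hφw2, hLφ]
      _ ≤ |LL μY μX U E φ x| := le_abs_self _
      _ ≤ ((c : ℝ) * ‖φ‖) * ‖x‖ := LL_bound μY μX U hE φ x
      _ ≤ (c : ℝ) * ‖x‖ := by
          have h1 : (c : ℝ) * ‖φ‖ ≤ (c : ℝ) * 1 := mul_le_mul_of_nonneg_left hφ1 c.coe_nonneg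
          nlinarith [norm_nonneg x]
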